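/- arXiv:1003.0579 — 4 statements merged into one kernel-verified Lean document; each statement's English description precedes it below -/
import Mathlib

section
/- Fix n ≥ 1, weights b_1,...,b_n ∈ (0,1), and r' > 1 with ∑_{i=1}^n b_i^{r'} = 1, and let r satisfy 1/r + 1/r' = 1. Let the Tsirelson-type norm ‖·‖ on c_00 be defined as the supremum of ⟨f, x⟩ over f in the norming set W[(A_n, b̄)]. Then for every x ∈ c_00, ‖x‖ ≤ ‖x‖_{ℓ_r}. -/
/-- The norming set `W[(𝒜_n, b̄)]` of the Tsirelson-type space `T(𝒜_n, b̄)`. -/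
inductive IsW (n : ℕ) (b : Fin n → ℝ) : (ℕ →₀ ℝ) → Prop
  | unit (k : ℕ) (ε : ℝ) (hε : ε = 1 ∨ ε = -1) : IsW n b (Finsupp.single k ε)
  | combine (a : ℕ) (ha : 1 ≤ a) (han : a ≤ n) (f : Fin a → (ℕ →₀ ℝ))
      (hf : ∀ i, IsW n b (f i))
      (hsucc : ∀ i j : Fin a, i < j → ∀ p ∈ (f i).support, ∀ q ∈ (f j).support, p < q) :
      IsW n b (∑ i : Fin a, b (Fin.castLE han i) • f i)

/-- The Tsirelson-type norm: `‖x‖ = sup { ⟨f, x⟩ : f ∈ W[(𝒜_n, b̄)] }`. -/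
noncomputable def tnorm (n : ℕ) (b : Fin n → ℝ) (x : ℕ →₀ ℝ) : ℝ :=
  sSup {y | ∃ f : ℕ →₀ ℝ, IsW n b f ∧ y = f.sum fun k c => c * x k}

lemma key (n : ℕ) (b : Fin n → ℝ) (hb : ∀ i, 0 < b i ∧ b i < 1)
    (r r' : ℝ) (hpq : Real.HolderConjugate r' r) (hsum : ∑ i, b i ^ r' = 1)
    (x : ℕ →₀ ℝ) :
    ∀ f, IsW n b f →
      (f.sum fun k c => c * x k) ≤ (∑ k ∈ f.support, |x k| ^ r) ^ (1 / r) := by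
  have hr : (0:ℝ) < r := hpq.symm.pos
  intro f hf
  induction hf with
  | unit k ε hε =>
      have hε0 : ε ≠ 0 := by rcases hε with h | h <;> simp [h]
      rw [Finsupp.sum_single_index (by simp), Finsupp.support_single_ne_zero _ hε0]
      have h1 : ε * x k ≤ |x k| := by
        calc ε * x k ≤ |ε * x k| := le_abs_self _
        _ = |x k| := by rcases hε with h | h <;> simp [h, abs_mul]
      refine h1.trans_eq ?_
      rw [Finset.sum_singleton, one_div, Real.rpow_rpow_inv (abs_nonneg _) hr.ne']
  | combine a ha han f hf hsucc ih =>
      have hpairing : ∀ y : ℕ →₀ ℝ,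
          (y.sum fun k v => v * x k) = Finsupp.linearCombination ℝ (⇑x) y := by
        intro y; rw [Finsupp.linearCombination_apply]; rfl
      have hdisj : ∀ i j : Fin a, i ≠ j → Disjoint (f i).support (f j).support := by
        intro i j hij
        rw [Finset.disjoint_left]
        intro p hpi hpj
        rcases lt_or_gt_of_ne hij with h | h
        · exact lt_irrefl p (hsucc i j h p hpi p hpj)
        · exact lt_irrefl p (hsucc j i h p hpj p hpi)
      have hbne : ∀ i : Fin a, b (Fin.castLE han i) ≠ 0 := fun i => (hb _).1.ne'
      have hsupp : (∑ i : Fin a, b (Fin.castLE han i) • f i).support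
          = Finset.univ.biUnion fun i => (f i).support := by
        rw [Finsupp.support_sum_eq_biUnion]
        · exact Finset.biUnion_congr rfl fun i _ => Finsupp.support_smul_eq (hbne i)
        · intro i j hij
          rw [Finsupp.support_smul_eq (hbne i), Finsupp.support_smul_eq (hbne j)]
          exact hdisj i j hij
      set S : Fin a → ℝ := fun i => (∑ k ∈ (f i).support, |x k| ^ r) ^ (1/r) with hS
      have hsum0 : ∀ i : Fin a, (0:ℝ) ≤ ∑ k ∈ (f i).support, |x k| ^ r :=
        fun i => Finset.sum_nonneg fun k _ => Real.rpow_nonneg (abs_nonneg _) _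
      have hS0 : ∀ i, 0 ≤ S i := fun i => Real.rpow_nonneg (hsum0 i) _
      have hSr : ∀ i, S i ^ r = ∑ k ∈ (f i).support, |x k| ^ r := by
        intro i
        rw [hS, one_div, Real.rpow_inv_rpow (hsum0 i) hr.ne']
      have hT : ∑ i : Fin a, S i ^ r
          = ∑ k ∈ (∑ i : Fin a, b (Fin.castLE han i) • f i).support, |x k| ^ r := by
        rw [hsupp, Finset.sum_biUnion]
        · exact Finset.sum_congr rfl fun i _ => hSr i
        · intro i _ j _ hij
          exact hdisj i j hij
      have hX0 : (0:ℝ) ≤ (∑ i : Fin a, S i ^ r) ^ (1/r) :=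
        Real.rpow_nonneg (Finset.sum_nonneg fun i _ => Real.rpow_nonneg (hS0 i) _) _
      calc ((∑ i : Fin a, b (Fin.castLE han i) • f i).sum fun k v => v * x k)
          = ∑ i : Fin a, b (Fin.castLE han i) * ((f i).sum fun k v => v * x k) := by
            simp_rw [hpairing, map_sum, map_smul, smul_eq_mul]
        _ ≤ ∑ i : Fin a, b (Fin.castLE han i) * S i :=
            Finset.sum_le_sum fun i _ => mul_le_mul_of_nonneg_left (ih i) (hb _).1.le
        _ ≤ (∑ i : Fin a, b (Fin.castLE han i) ^ r') ^ (1/r')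
              * (∑ i : Fin a, S i ^ r) ^ (1/r) :=
            Real.inner_le_Lp_mul_Lq_of_nonneg Finset.univ hpq (fun i _ => (hb _).1.le)
              (fun i _ => hS0 i)
        _ ≤ 1 * (∑ i : Fin a, S i ^ r) ^ (1/r) := by
            refine mul_le_mul_of_nonneg_right ?_ hX0
            have hle : ∑ i : Fin a, b (Fin.castLE han i) ^ r' ≤ 1 := by
              rw [← hsum]
              have hmap := Finset.sum_map Finset.univ (Fin.castLEEmb han)
                (fun j => b j ^ r')
              simp only [Fin.castLEEmb_apply] at hmap
              rw [← hmap]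
              exact Finset.sum_le_sum_of_subset_of_nonneg (Finset.subset_univ _)
                (fun j _ _ => Real.rpow_nonneg (hb j).1.le _)
            calc (∑ i : Fin a, b (Fin.castLE han i) ^ r') ^ (1/r')
                ≤ (1:ℝ) ^ (1/r') := Real.rpow_le_rpow
                  (Finset.sum_nonneg fun i _ => Real.rpow_nonneg (hb _).1.le _) hle
                  hpq.one_div_nonneg
              _ = 1 := Real.one_rpow _
        _ = (∑ k ∈ (∑ i : Fin a, b (Fin.castLE han i) • f i).support, |x k| ^ r) ^ (1/r) := by
            rw [one_mul, hT]

/-- The Tsirelson-type norm is dominated by the `ℓ_r` norm: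
for every finitely supported `x`, `‖x‖ ≤ (∑_k |x k| ^ r) ^ (1/r)`. -/
theorem stmt_3 (n : ℕ) (hn : 1 ≤ n) (b : Fin n → ℝ) (hb : ∀ i, 0 < b i ∧ b i < 1)
    (r r' : ℝ) (hr' : 1 < r') (hrr' : 1 / r + 1 / r' = 1)
    (hsum : ∑ i, b i ^ r' = 1)
    (x : ℕ →₀ ℝ) :
    tnorm n b x ≤ (x.sum fun _ c => |c| ^ r) ^ (1 / r) := by
  have hpq : r'.HolderConjugate r := by
    rw [Real.holderConjugate_iff]
    constructor
    · exact hr'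
    · rw [inv_eq_one_div, inv_eq_one_div]; linarith
  have hr : (0:ℝ) < r := hpq.symm.pos
  have hxsum : (x.sum fun _ c => |c| ^ r) = ∑ k ∈ x.support, |x k| ^ r := rfl
  have hB0 : (0:ℝ) ≤ (x.sum fun _ c => |c| ^ r) ^ (1/r) := by
    rw [hxsum]
    exact Real.rpow_nonneg
      (Finset.sum_nonneg fun k _ => Real.rpow_nonneg (abs_nonneg _) _) _
  apply Real.sSup_le _ hB0
  rintro y ⟨f, hf, rfl⟩
  refine (key n b hb r r' hpq hsum x f hf).trans ?_
  refine Real.rpow_le_rpow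
    (Finset.sum_nonneg fun k _ => Real.rpow_nonneg (abs_nonneg _) _) ?_
    (le_of_lt (by positivity : (0:ℝ) < 1/r))
  have h1 : ∑ k ∈ f.support, |x k| ^ r = ∑ k ∈ f.support ∩ x.support, |x k| ^ r := by
    refine (Finset.sum_subset Finset.inter_subset_left ?_).symm
    intro k hk hk2
    have hx0 : x k = 0 := by
      by_contra h
      exact hk2 (Finset.mem_inter.2 ⟨hk, Finsupp.mem_support_iff.2 h⟩)
    rw [hx0, abs_zero, Real.zero_rpow hr.ne']
  rw [hxsum, h1]
  exact Finset.sum_le_sum_of_subset_of_nonneg Finset.inter_subset_right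
    (fun k _ _ => Real.rpow_nonneg (abs_nonneg _) _)
end

section
/- Fix n ≥ 1 and b_1,...,b_n ∈ (0,1). For each j ∈ ℕ, identify the set M_j = {1,...,n}^j with an interval of natural numbers of length n^j, and define f_j = ∑_{s ∈ M_j} (∏_{i=1}^j b_{s_i}) e_s*. Then f_j belongs to the norming set W[(A_n, b̄)], and the sum of its coefficients equals (∑_{i=1}^n b_i)^j. -/
/-- The identification of `M_j = {1,…,n}^j` with the interval `{0,…,n^j - 1}` of `ℕ`,
via the lexicographic (most-significant-digit-first) base-`n` enumeration. -/
def enc (n j : ℕ) (s : Fin j → Fin n) : ℕ :=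
  ∑ i : Fin j, (s i : ℕ) * n ^ (j - 1 - (i : ℕ))

lemma enc_succ (n j : ℕ) (s : Fin (j+1) → Fin n) :
    enc n (j+1) s = (s 0 : ℕ) * n ^ j + enc n j (fun i => s i.succ) := by
  unfold enc
  rw [Fin.sum_univ_succ]
  simp only [Fin.val_succ, Fin.val_zero, Nat.add_sub_cancel, Nat.sub_zero]
  congr 1
  apply Finset.sum_congr rfl
  intro i _
  congr 2
  omega

lemma enc_lt (n : ℕ) (hn : 1 ≤ n) : ∀ j (s : Fin j → Fin n), enc n j s < n ^ j := by
  intro j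
  induction j with
  | zero => intro s; simp [enc]
  | succ j ih =>
    intro s
    rw [enc_succ]
    have h1 := ih (fun i => s i.succ)
    have h2 : (s 0 : ℕ) + 1 ≤ n := (s 0).2
    calc (s 0 : ℕ) * n ^ j + enc n j (fun i => s i.succ)
        < ((s 0 : ℕ) + 1) * n ^ j := by nlinarith
      _ ≤ n * n ^ j := Nat.mul_le_mul_right _ h2
      _ = n ^ (j+1) := by ring

lemma support_subset_Ico (n : ℕ) (hn : 1 ≤ n) (b : Fin n → ℝ) (j m : ℕ) :
    (∑ s : Fin j → Fin n, (∏ i, b (s i)) • Finsupp.single (m + enc n j s) (1 : ℝ)).support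
      ⊆ Finset.Ico m (m + n ^ j) := by
  refine (Finsupp.support_finset_sum).trans ?_
  intro p hp
  simp only [Finset.mem_biUnion] at hp
  obtain ⟨s, -, hs⟩ := hp
  have h1 : p ∈ (Finsupp.single (m + enc n j s) (1 : ℝ)).support :=
    Finsupp.support_smul hs
  rw [Finsupp.support_single_ne_zero _ one_ne_zero, Finset.mem_singleton] at h1
  subst h1
  simp only [Finset.mem_Ico]
  exact ⟨Nat.le_add_right _ _, by have := enc_lt n hn j s; omega⟩

lemma aux_isW (n : ℕ) (hn : 1 ≤ n) (b : Fin n → ℝ) :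
    ∀ j m, IsW n b (∑ s : Fin j → Fin n, (∏ i, b (s i)) • Finsupp.single (m + enc n j s) (1 : ℝ)) := by
  intro j
  induction j with
  | zero =>
    intro m
    have : (∑ s : Fin 0 → Fin n, (∏ i, b (s i)) • Finsupp.single (m + enc n 0 s) (1 : ℝ))
        = Finsupp.single m 1 := by
      simp [enc]
    rw [this]
    exact IsW.unit m 1 (Or.inl rfl)
  | succ j ih =>
    intro m
    set f : Fin n → (ℕ →₀ ℝ) := fun k =>
      ∑ t : Fin j → Fin n, (∏ i, b (t i)) • Finsupp.single ((m + (k : ℕ) * n ^ j) + enc n j t) (1 : ℝ)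
      with hf
    have key : (∑ s : Fin (j+1) → Fin n, (∏ i, b (s i)) • Finsupp.single (m + enc n (j+1) s) (1 : ℝ))
        = ∑ k : Fin n, b (Fin.castLE (le_refl n) k) • f k := by
      rw [← ((Fin.consEquiv (fun _ : Fin (j+1) => Fin n)).sum_comp
        (fun s => (∏ i, b (s i)) • Finsupp.single (m + enc n (j+1) s) (1 : ℝ)))]
      rw [Fintype.sum_prod_type]
      apply Finset.sum_congr rfl
      intro k _
      rw [hf, Finset.smul_sum]
      apply Finset.sum_congr rfl
      intro t _
      simp only [Fin.consEquiv_apply, enc_succ, Fin.cons_zero, Fin.cons_succ]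
      rw [Fin.prod_univ_succ]
      simp only [Fin.cons_zero, Fin.cons_succ]
      rw [smul_smul]
      congr 2
      rw [show (enc n j fun i => t i) = enc n j t from rfl]
      omega
    rw [key]
    refine IsW.combine n hn (le_refl n) f (fun k => ih _) ?_
    intro i k hik p hp q hq
    have h1 := support_subset_Ico n hn b j (m + (i : ℕ) * n ^ j) hp
    have h2 := support_subset_Ico n hn b j (m + (k : ℕ) * n ^ j) hq
    simp only [Finset.mem_Ico] at h1 h2
    have hik' : (i : ℕ) + 1 ≤ (k : ℕ) := hik
    have : ((i : ℕ) + 1) * n ^ j ≤ (k : ℕ) * n ^ j := Nat.mul_le_mul_right _ hik'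
    nlinarith [h1.2, h2.1]

/-- the functional `f_j = ∑_{s ∈ M_j} (∏_{i=1}^j b_{s_i}) e_s*` belongs to the
norming set `W[(𝒜_n, b̄)]`, and the sum of its coefficients equals `(∑_{i=1}^n b_i)^j`. -/
theorem stmt_5 (n : ℕ) (hn : 1 ≤ n) (b : Fin n → ℝ) (hb : ∀ i, 0 < b i ∧ b i < 1) (j : ℕ) :
    IsW n b (∑ s : Fin j → Fin n, (∏ i, b (s i)) • Finsupp.single (enc n j s) (1 : ℝ)) ∧
    ((∑ s : Fin j → Fin n, (∏ i, b (s i)) • Finsupp.single (enc n j s) (1 : ℝ)).sum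
        fun _ c => c) = (∑ i, b i) ^ j := by
  constructor
  · have h := aux_isW n hn b j 0
    simpa using h
  · have hadd : ∀ (S : Finset (Fin j → Fin n)),
        ((∑ s ∈ S, (∏ i, b (s i)) • Finsupp.single (enc n j s) (1 : ℝ)).sum fun _ c => c)
          = ∑ s ∈ S, (((∏ i, b (s i)) • Finsupp.single (enc n j s) (1 : ℝ)).sum fun _ c => c) := by
      intro S
      induction S using Finset.cons_induction with
      | empty => simp
      | cons a S ha ih =>
        rw [Finset.sum_cons, Finset.sum_cons,
          Finsupp.sum_add_index' (fun _ => rfl) (fun _ _ _ => rfl), ih]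
    rw [hadd]
    have hterm : ∀ s : Fin j → Fin n,
        (((∏ i, b (s i)) • Finsupp.single (enc n j s) (1 : ℝ)).sum fun _ c => c)
          = ∏ i, b (s i) := by
      intro s
      rw [Finsupp.smul_single, smul_eq_mul, mul_one,
        Finsupp.sum_single_index rfl]
    rw [Finset.sum_congr rfl (fun s _ => hterm s)]
    calc ∑ s : Fin j → Fin n, ∏ i, b (s i)
        = ∏ _i : Fin j, ∑ k, b k := by
          rw [Finset.prod_univ_sum]
          rw [Fintype.piFinset_univ]
      _ = (∑ i, b i) ^ j := by
          rw [Finset.prod_const, Finset.card_univ, Fintype.card_fin]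
end

section
/- Let C ≥ 1 and suppose (i_{q,m}) is a system of linear maps i_{q,m} : ℓ^∞(Γ_q) → ℓ^∞(Γ_m) (for q ≤ m, Γ_q finite increasing sets) satisfying i_{q,m} = i_{l,m} ∘ i_{q,l} for q ≤ l ≤ m and ‖i_{q,m}‖ ≤ C for all q ≤ m, with each i_{q,m} extending the identity on coordinates in Γ_q. Define projections P_{(p,q]} : X → X on the space X generated by the images by P_{(p,q]}(x) = i_q(r_q(x)) − i_p(r_p(x)), where r_q is restriction to Γ_q and i_q is the direct limit map. Then ‖P_{(p,q]}‖ ≤ 2C, and the finite-dimensional spaces M_q = i_q[ℓ^∞(Δ_q)] (where Δ_q = Γ_q \ Γ_{q−1}) form a finite-dimensional decomposition of X. -/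
/-- Bourgain–Delbaen setup, Proposition 2.1: given a compatible uniformly
`C`-bounded system of extension operators `i_{q,m} : ℓ^∞(Γ_q) → ℓ^∞(Γ_m)` extending the
identity on the coordinates of `Γ_q`, with direct limit maps `I_q : ℓ^∞(Γ_q) → ℓ^∞(Γ)`,
the projections `P_{(p,q]} x = I_q (r_q x) − I_p (r_p x)` have norm at most `2C`, and the
spaces `M_q = I_q[ℓ^∞(Δ_q)]` form a finite-dimensional decomposition of
`X = closure (⋃_q I_q[ℓ^∞(Γ_q)])`: every `x ∈ X` is the limit of its partial sums
`I_q (r_q x)`, whose increments lie in the corresponding `M_{q+1}`. -/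
theorem stmt_12 (Γ : Type*) (Γq : ℕ → Finset Γ)
    (hmono : ∀ q, Γq q ⊂ Γq (q + 1))
    (hcover : ∀ γ : Γ, ∃ q, γ ∈ Γq q)
    (C : ℝ) (hC : 1 ≤ C)
    (i : ∀ q m, q ≤ m → (({γ // γ ∈ Γq q} → ℝ) →ₗ[ℝ] ({γ // γ ∈ Γq m} → ℝ)))
    (hid : ∀ q (y : {γ // γ ∈ Γq q} → ℝ), i q q le_rfl y = y)
    (hcomp : ∀ q l m (hql : q ≤ l) (hlm : l ≤ m) (y : {γ // γ ∈ Γq q} → ℝ),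
      i q m (hql.trans hlm) y = i l m hlm (i q l hql y))
    (hext : ∀ q m (h : q ≤ m) (y : {γ // γ ∈ Γq q} → ℝ) (γ : Γ) (hγq : γ ∈ Γq q)
      (hγm : γ ∈ Γq m), i q m h y ⟨γ, hγm⟩ = y ⟨γ, hγq⟩)
    (hbound : ∀ q m (h : q ≤ m) (y : {γ // γ ∈ Γq q} → ℝ), ‖i q m h y‖ ≤ C * ‖y‖)
    (I : ∀ q, ({γ // γ ∈ Γq q} → ℝ) →ₗ[ℝ] lp (fun _ : Γ => ℝ) ⊤)
    (hI : ∀ q m (h : q ≤ m) (y : {γ // γ ∈ Γq q} → ℝ) (γ : Γ) (hγ : γ ∈ Γq m),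
      (I q y : ∀ _ : Γ, ℝ) γ = i q m h y ⟨γ, hγ⟩) :
    (∀ p q (_ : p ≤ q) (x : lp (fun _ : Γ => ℝ) ⊤),
      ‖I q (fun γ : {γ // γ ∈ Γq q} => x γ) - I p (fun γ : {γ // γ ∈ Γq p} => x γ)‖
        ≤ 2 * C * ‖x‖) ∧
    (∀ x ∈ closure (⋃ q, Set.range (I q)),
      Filter.Tendsto (fun q => I q (fun γ : {γ // γ ∈ Γq q} => x γ))
        Filter.atTop (nhds x)) ∧
    (∀ x ∈ closure (⋃ q, Set.range (I q)), ∀ q : ℕ,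
      (I (q + 1) (fun γ : {γ // γ ∈ Γq (q + 1)} => x γ)
          - I q (fun γ : {γ // γ ∈ Γq q} => x γ))
        ∈ (I (q + 1)) ''
          {y : {γ // γ ∈ Γq (q + 1)} → ℝ | ∀ γ : {γ // γ ∈ Γq (q + 1)}, (γ : Γ) ∈ Γq q → y γ = 0}) := by
  -- monotonicity of Γq
  have hsub : ∀ {q m : ℕ}, q ≤ m → Γq q ⊆ Γq m := by
    intro q m h
    induction h with
    | refl => exact subset_rfl
    | step h ih => exact ih.trans (hmono _).subset
  -- norm bound for I q
  have hInorm : ∀ q (y : {γ // γ ∈ Γq q} → ℝ), ‖I q y‖ ≤ C * ‖y‖ := by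
    intro q y
    refine lp.norm_le_of_forall_le (by positivity) ?_
    intro γ
    obtain ⟨m₀, hm₀⟩ := hcover γ
    have hγ : γ ∈ Γq (max q m₀) := hsub (le_max_right _ _) hm₀
    rw [hI q (max q m₀) (le_max_left _ _) y γ hγ]
    calc ‖i q (max q m₀) (le_max_left _ _) y ⟨γ, hγ⟩‖
        ≤ ‖i q (max q m₀) (le_max_left _ _) y‖ := norm_le_pi_norm _ _
      _ ≤ C * ‖y‖ := hbound _ _ _ _
  -- I q ∘ i p q = I p
  have hIi : ∀ p q (h : p ≤ q) (y : {γ // γ ∈ Γq p} → ℝ),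
      I q (i p q h y) = I p y := by
    intro p q h y
    apply lp.ext
    funext γ
    obtain ⟨m₀, hm₀⟩ := hcover γ
    have hγ : γ ∈ Γq (max q m₀) := hsub (le_max_right _ _) hm₀
    rw [hI q (max q m₀) (le_max_left _ _) _ γ hγ,
      hI p (max q m₀) (h.trans (le_max_left _ _)) y γ hγ, hcomp p q (max q m₀) h]
  -- restriction norm bound
  have hres : ∀ q (x : lp (fun _ : Γ => ℝ) ⊤),
      ‖(fun γ : {γ // γ ∈ Γq q} => x γ)‖ ≤ ‖x‖ := by
    intro q x
    refine (pi_norm_le_iff_of_nonneg (norm_nonneg x)).2 ?_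
    intro γ
    exact lp.norm_apply_le_norm (by simp) x γ
  have hP : ∀ q (x : lp (fun _ : Γ => ℝ) ⊤),
      ‖I q (fun γ : {γ // γ ∈ Γq q} => x γ)‖ ≤ C * ‖x‖ := by
    intro q x
    exact (hInorm q _).trans (by nlinarith [hres q x, norm_nonneg (fun γ : {γ // γ ∈ Γq q} => x γ)])
  -- P q fixes range of I p for p ≤ q
  have hfix : ∀ p q (h : p ≤ q) (y : {γ // γ ∈ Γq p} → ℝ),
      I q (fun γ : {γ // γ ∈ Γq q} => (I p y : ∀ _ : Γ, ℝ) γ) = I p y := by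
    intro p q h y
    have : (fun γ : {γ // γ ∈ Γq q} => (I p y : ∀ _ : Γ, ℝ) γ) = i p q h y := by
      funext γ
      exact hI p q h y γ γ.2
    rw [this, hIi]
  refine ⟨?_, ?_, ?_⟩
  · intro p q h x
    calc ‖I q (fun γ : {γ // γ ∈ Γq q} => x γ) - I p (fun γ : {γ // γ ∈ Γq p} => x γ)‖
        ≤ ‖I q (fun γ : {γ // γ ∈ Γq q} => x γ)‖ + ‖I p (fun γ : {γ // γ ∈ Γq p} => x γ)‖ :=
          norm_sub_le _ _
      _ ≤ C * ‖x‖ + C * ‖x‖ := add_le_add (hP q x) (hP p x)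
      _ = 2 * C * ‖x‖ := by ring
  · intro x hx
    rw [Metric.tendsto_atTop]
    intro ε hε
    have hC1 : (0:ℝ) < C + 1 := by linarith
    obtain ⟨z, hz, hdz⟩ := Metric.mem_closure_iff.1 hx (ε / (C + 1)) (by positivity)
    obtain ⟨p, y, rfl⟩ := Set.mem_iUnion.1 hz
    refine ⟨p, fun q hq => ?_⟩
    have key : I q (fun γ : {γ // γ ∈ Γq q} => x γ) - x
        = I q (fun γ : {γ // γ ∈ Γq q} => (x - I p y : lp (fun _ : Γ => ℝ) ⊤) γ)
          - (x - I p y) := by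
      have hsubfun : (fun γ : {γ // γ ∈ Γq q} => (x - I p y : lp (fun _ : Γ => ℝ) ⊤) γ)
          = (fun γ : {γ // γ ∈ Γq q} => x γ) - (fun γ : {γ // γ ∈ Γq q} => (I p y : ∀ _ : Γ, ℝ) γ) := by
        funext γ; simp
      rw [hsubfun, map_sub, hfix p q hq y]
      abel
    rw [dist_eq_norm, key]
    calc ‖I q (fun γ : {γ // γ ∈ Γq q} => (x - I p y : lp (fun _ : Γ => ℝ) ⊤) γ) - (x - I p y)‖
        ≤ C * ‖x - I p y‖ + ‖x - I p y‖ := by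
          refine (norm_sub_le _ _).trans (add_le_add (hP q _) le_rfl)
      _ = (C + 1) * ‖x - I p y‖ := by ring
      _ < (C + 1) * (ε / (C + 1)) := by
          have : ‖x - I p y‖ < ε / (C + 1) := by rwa [dist_eq_norm] at hdz
          exact (mul_lt_mul_iff_right₀ hC1).2 this
      _ = ε := by field_simp
  · intro x _ q
    refine ⟨(fun γ : {γ // γ ∈ Γq (q+1)} => x γ)
      - i q (q+1) (Nat.le_succ q) (fun γ : {γ // γ ∈ Γq q} => x γ), ?_, ?_⟩
    · intro γ hγ
      simp only [Pi.sub_apply]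
      rw [hext q (q+1) (Nat.le_succ q) _ γ hγ γ.2]
      simp
    · rw [map_sub, hIi q (q+1) (Nat.le_succ q)]
end

section
/- Fix n ≥ 1 and b_1,...,b_n ∈ (0,1). For every f ∈ W[(A_n, b̄)] there exists g ∈ W[(A_n, b̄)] such that |f(m)| ≤ g(m) for all m ∈ ℕ and g admits a tree analysis in which every non-maximal node has at least two nonzero immediate successors (i.e., g is a proper functional). Consequently, the set W_pr of proper functionals 1-norms T(A_n, b̄): for every x, ‖x‖_{T(A_n,b̄)} = sup { g(x) : g ∈ W_pr }. -/
/-- The proper functionals: those admitting a tree analysis in which every non-maximal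
node has at least two (nonzero) immediate successors. -/
inductive IsWpr (n : ℕ) (b : Fin n → ℝ) : (ℕ →₀ ℝ) → Prop
  | unit (k : ℕ) (ε : ℝ) (hε : ε = 1 ∨ ε = -1) : IsWpr n b (Finsupp.single k ε)
  | combine (a : ℕ) (ha : 2 ≤ a) (han : a ≤ n) (f : Fin a → (ℕ →₀ ℝ))
      (hf : ∀ i, IsWpr n b (f i))
      (hsucc : ∀ i j : Fin a, i < j → ∀ p ∈ (f i).support, ∀ q ∈ (f j).support, p < q) :
      IsWpr n b (∑ i : Fin a, b (Fin.castLE han i) • f i)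

section Aux
variable {n : ℕ} {b : Fin n → ℝ}

lemma wpr_isW {g : ℕ →₀ ℝ} (hg : IsWpr n b g) : IsW n b g := by
  induction hg with
  | unit k ε hε => exact IsW.unit k ε hε
  | combine a ha han f hf hsucc ih => exact IsW.combine a (by omega) han f ih hsucc

lemma twist (s : ℕ → ℝ) (hs : ∀ m, s m = 1 ∨ s m = -1)
    {g : ℕ →₀ ℝ} (hg : IsWpr n b g) :
    ∃ g', IsWpr n b g' ∧ ∀ m, g' m = s m * g m := by
  induction hg with
  | unit k ε hε =>
      refine ⟨Finsupp.single k (s k * ε), ?_, ?_⟩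
      · exact IsWpr.unit k _ (by rcases hs k with h | h <;> rcases hε with h' | h' <;>
          simp [h, h'])
      · intro m
        rcases eq_or_ne m k with rfl | hm
        · simp [Finsupp.single_apply]
        · simp [Finsupp.single_apply, Ne.symm hm]
  | combine a ha han f hf hsucc ih =>
      choose g' hg' hg'eq using ih
      refine ⟨∑ i, b (Fin.castLE han i) • g' i, ?_, ?_⟩
      · refine IsWpr.combine a ha han g' hg' ?_
        intro i j hij p hp q hq
        refine hsucc i j hij p ?_ q ?_
        · refine Finsupp.mem_support_iff.2 fun h => Finsupp.mem_support_iff.1 hp ?_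
          rw [hg'eq, h, mul_zero]
        · refine Finsupp.mem_support_iff.2 fun h => Finsupp.mem_support_iff.1 hq ?_
          rw [hg'eq, h, mul_zero]
      · intro m
        rw [Finsupp.finset_sum_apply, Finsupp.finset_sum_apply, Finset.mul_sum]
        refine Finset.sum_congr rfl fun i _ => ?_
        rw [Finsupp.smul_apply, Finsupp.smul_apply, smul_eq_mul, smul_eq_mul, hg'eq i m]
        ring

lemma dominate (hb : ∀ i, 0 < b i ∧ b i < 1) {f : ℕ →₀ ℝ} (hf : IsW n b f) :
    ∃ g, IsWpr n b g ∧ g.support ⊆ f.support ∧ ∀ m, |f m| ≤ g m := by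
  induction hf with
  | unit k ε hε =>
      refine ⟨Finsupp.single k 1, IsWpr.unit k 1 (Or.inl rfl), ?_, ?_⟩
      · intro m hm
        simp only [Finsupp.mem_support_iff, Finsupp.single_apply] at hm ⊢
        rcases eq_or_ne k m with rfl | h
        · simp; rcases hε with h'|h' <;> simp [h']
        · simp [h] at hm
      · intro m
        rcases eq_or_ne m k with rfl | hm
        · rcases hε with h|h <;> simp [h]
        · simp [Finsupp.single_apply, Ne.symm hm]
  | combine a ha han f hf hsucc ih =>
      choose g hgpr hgsupp hgdom using ih
      rcases eq_or_lt_of_le ha with h1 | h2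
      · -- a = 1 : collapse the node
        subst h1
        refine ⟨g 0, hgpr 0, ?_, ?_⟩
        · intro m hm
          have hf0 : (f 0) m ≠ 0 := Finsupp.mem_support_iff.1 (hgsupp 0 hm)
          rw [Fin.sum_univ_one]
          refine Finsupp.mem_support_iff.2 ?_
          rw [Finsupp.smul_apply, smul_eq_mul]
          exact mul_ne_zero (ne_of_gt (hb _).1) hf0
        · intro m
          rw [Fin.sum_univ_one, Finsupp.smul_apply, smul_eq_mul, abs_mul,
              abs_of_pos (hb _).1]
          calc b _ * |f 0 m| ≤ 1 * |f 0 m| :=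
                mul_le_mul_of_nonneg_right (le_of_lt (hb _).2) (abs_nonneg _)
            _ = |f 0 m| := one_mul _
            _ ≤ g 0 m := hgdom 0 m
      · refine ⟨∑ i, b (Fin.castLE han i) • g i, IsWpr.combine a h2 han g hgpr
          (fun i j hij p hp q hq => hsucc i j hij p (hgsupp i hp) q (hgsupp j hq)), ?_, ?_⟩
        · intro m hm
          rw [Finsupp.mem_support_iff, Finsupp.finset_sum_apply] at hm
          obtain ⟨i, -, hi⟩ := Finset.exists_ne_zero_of_sum_ne_zero hm
          have hgi : (g i) m ≠ 0 := by
            intro h; apply hi; rw [Finsupp.smul_apply, h, smul_zero]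
          have hfi : (f i) m ≠ 0 :=
            Finsupp.mem_support_iff.1 (hgsupp i (Finsupp.mem_support_iff.2 hgi))
          rw [Finsupp.mem_support_iff, Finsupp.finset_sum_apply]
          have key : ∀ j ∈ Finset.univ, j ≠ i → (b (Fin.castLE han j) • f j) m = 0 := by
            intro j _ hji
            rw [Finsupp.smul_apply]
            rcases eq_or_ne ((f j) m) 0 with h0 | h0
            · rw [h0, smul_zero]
            · exfalso
              have hmj : m ∈ (f j).support := Finsupp.mem_support_iff.2 h0
              have hmi : m ∈ (f i).support := Finsupp.mem_support_iff.2 hfi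
              rcases lt_or_gt_of_ne hji with h | h
              · exact lt_irrefl m (hsucc j i h m hmj m hmi)
              · exact lt_irrefl m (hsucc i j h m hmi m hmj)
          rw [Finset.sum_eq_single_of_mem i (Finset.mem_univ i) key,
              Finsupp.smul_apply, smul_eq_mul]
          exact mul_ne_zero (ne_of_gt (hb _).1) hfi
        · intro m
          rw [Finsupp.finset_sum_apply, Finsupp.finset_sum_apply]
          refine (Finset.abs_sum_le_sum_abs _ _).trans (Finset.sum_le_sum fun i _ => ?_)
          rw [Finsupp.smul_apply, Finsupp.smul_apply, smul_eq_mul, smul_eq_mul,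
              abs_mul, abs_of_pos (hb _).1]
          exact mul_le_mul_of_nonneg_left (hgdom i m) (le_of_lt (hb _).1)

end Aux

/-- every `f ∈ W[(𝒜_n, b̄)]` is pointwise dominated in absolute value by a
proper functional `g`, and consequently the proper functionals `1`-norm `T(𝒜_n, b̄)`. -/
theorem stmt_14 (n : ℕ) (hn : 1 ≤ n) (b : Fin n → ℝ) (hb : ∀ i, 0 < b i ∧ b i < 1) :
    (∀ f : ℕ →₀ ℝ, IsW n b f → ∃ g : ℕ →₀ ℝ, IsWpr n b g ∧ ∀ m : ℕ, |f m| ≤ g m) ∧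
    (∀ x : ℕ →₀ ℝ,
      tnorm n b x = sSup {y | ∃ g : ℕ →₀ ℝ, IsWpr n b g ∧ y = g.sum fun k c => c * x k}) := by
  constructor
  · intro f hf
    obtain ⟨g, hg, -, hdom⟩ := dominate hb hf
    exact ⟨g, hg, hdom⟩
  · intro x
    rw [tnorm]
    set S := {y | ∃ f : ℕ →₀ ℝ, IsW n b f ∧ y = f.sum fun k c => c * x k} with hS
    set T := {y | ∃ g : ℕ →₀ ℝ, IsWpr n b g ∧ y = g.sum fun k c => c * x k} with hT
    have hTS : T ⊆ S := fun y ⟨g, hg, hy⟩ => ⟨g, wpr_isW hg, hy⟩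
    have hne : T.Nonempty := ⟨_, Finsupp.single 0 1, IsWpr.unit 0 1 (Or.inl rfl), rfl⟩
    have hSne : S.Nonempty := hne.mono hTS
    have key : ∀ y ∈ S, ∃ z ∈ T, y ≤ z := by
      rintro y ⟨f, hf, rfl⟩
      obtain ⟨g, hgpr, hgsupp, hgdom⟩ := dominate hb hf
      set s : ℕ → ℝ := fun m => if x m < 0 then -1 else 1 with hsdef
      have hs : ∀ m, s m = 1 ∨ s m = -1 := by
        intro m; by_cases h : x m < 0 <;> simp [hsdef, h]
      obtain ⟨g', hg'pr, hg'eq⟩ := twist s hs hgpr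
      have hsx : ∀ m, s m * x m = |x m| := by
        intro m; by_cases h : x m < 0
        · simp [hsdef, h, abs_of_neg h]
        · simp [hsdef, h, abs_of_nonneg (not_lt.1 h)]
      have hg'supp : g'.support ⊆ f.support := by
        intro m hm
        refine hgsupp (Finsupp.mem_support_iff.2 fun h => Finsupp.mem_support_iff.1 hm ?_)
        rw [hg'eq, h, mul_zero]
      refine ⟨_, ⟨g', hg'pr, rfl⟩, ?_⟩
      rw [Finsupp.sum, Finsupp.sum]
      have hz : (∑ m ∈ g'.support, g' m * x m) = ∑ m ∈ f.support, g' m * x m :=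
        Finset.sum_subset hg'supp (fun m _ hm => by
          rw [Finsupp.notMem_support_iff.1 hm, zero_mul])
      rw [hz]
      refine Finset.sum_le_sum fun m _ => ?_
      rw [hg'eq, mul_comm (s m) (g m), mul_assoc, hsx]
      calc f m * x m ≤ |f m * x m| := le_abs_self _
        _ = |f m| * |x m| := abs_mul _ _
        _ ≤ g m * |x m| := mul_le_mul_of_nonneg_right (hgdom m) (abs_nonneg _)
    by_cases hbdd : BddAbove S
    · apply le_antisymm
      · refine csSup_le hSne fun y hy => ?_
        obtain ⟨z, hzT, hyz⟩ := key y hy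
        exact hyz.trans (le_csSup (BddAbove.mono hTS hbdd) hzT)
      · exact csSup_le_csSup hbdd hne hTS
    · have hTbdd : ¬ BddAbove T := by
        rintro ⟨M, hM⟩
        exact hbdd ⟨M, fun y hy => by
          obtain ⟨z, hz, hyz⟩ := key y hy; exact hyz.trans (hM hz)⟩
      rw [Real.sSup_of_not_bddAbove hbdd, Real.sSup_of_not_bddAbove hTbdd]
end
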